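/- Let K be a field, n ≥ 1, m ≥ 1, and A_α : ℤ^m → M_n(K), b_α : ℤ^m → K^n for α ∈ {1,…,m}. The following are equivalent: (i) for every α and every t ∈ ℤ^m the matrix A_α(t) is invertible, and for all t ∈ ℤ^m and all α, β the identities A_α(t+1_β)A_β(t) = A_β(t+1_α)A_α(t) and A_α(t+1_β)b_β(t) + b_α(t+1_β) = A_β(t+1_α)b_α(t) + b_β(t+1_α) hold; (ii) for every (t₀,x₀) ∈ ℤ^m × K^n and every α₀ ∈ {1,…,m} there exists at least one function x : {t ∈ ℤ^m : t ≥ t₀ − 1_{α₀}} → K^n satisfying x(t+1_α) = A_α(t)x(t) + b_α(t) for all t ≥ t₀ − 1_{α₀} and all α, with x(t₀) = x₀; (iii) for every (t₀,x₀) and every α₀ such a function on {t ≥ t₀ − 1_{α₀}} exists and is unique; (iv) for all t₀, t₁ ∈ ℤ^m with t₁ ≤ t₀ and every x₀ ∈ K^n there is a unique function x : {t ∈ ℤ^m : t ≥ t₁} → K^n satisfying the recurrence for all t ≥ t₁ and the condition x(t₀) = x₀; (v) for every (t₀,x₀) ∈ ℤ^m × K^n there is a unique function x : ℤ^m → K^n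 satisfying the recurrence for all t ∈ ℤ^m and x(t₀) = x₀. -/

import Mathlib

open Matrix

namespace LMRAux

variable {m n : ℕ} {K : Type*} [Field K]

lemma single_nonneg' (α : Fin m) : (0 : Fin m → ℤ) ≤ Pi.single α 1 := by
  intro β
  by_cases h : β = α <;> simp [Pi.single_apply, h]

/-- Induction principle for nonnegative integer vectors. -/
lemma nonneg_induction {P : (Fin m → ℤ) → Prop} (h0 : P 0)
    (hs : ∀ k : Fin m → ℤ, 0 ≤ k → P k → ∀ α, P (k + Pi.single α 1)) :
    ∀ k : Fin m → ℤ, 0 ≤ k → P k := by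
  suffices H : ∀ (N : ℕ) (k : Fin m → ℤ), 0 ≤ k → (∑ α : Fin m, (k α).toNat) = N → P k by
    intro k hk; exact H _ k hk rfl
  intro N
  induction N using Nat.strong_induction_on with
  | _ N ih =>
    intro k hk hsum
    rcases eq_or_ne k 0 with h | h
    · subst h; exact h0
    · have hex : ∃ α, 0 < k α := by
        by_contra hc
        push_neg at hc
        exact h (funext fun α => le_antisymm (hc α) (hk α))
      obtain ⟨α, hα⟩ := hex
      have hk' : 0 ≤ k - Pi.single α 1 := by
        rw [sub_nonneg]
        intro β
        by_cases hb : β = α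
        · subst hb
          rw [Pi.single_eq_same]
          show (1:ℤ) ≤ k β
          omega
        · rw [Pi.single_eq_of_ne hb]
          exact hk β
      have hrw : k - Pi.single α 1 + Pi.single α 1 = k := by abel
      have hlt : (∑ β : Fin m, (((k - Pi.single α 1 : Fin m → ℤ)) β).toNat) < N := by
        rw [← hsum]
        apply Finset.sum_lt_sum
        · intro β _
          apply Int.toNat_le_toNat
          have h0 : (0:ℤ) ≤ (Pi.single α (1:ℤ) : Fin m → ℤ) β := single_nonneg' α β
          rw [Pi.sub_apply]
          omega
        · refine ⟨α, Finset.mem_univ α, ?_⟩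
          have h1 : ((k - Pi.single α 1 : Fin m → ℤ)) α = k α - 1 := by
            rw [Pi.sub_apply, Pi.single_eq_same]
          rw [h1]
          omega
      have hP := ih _ hlt (k - Pi.single α 1) hk' rfl
      have := hs _ hk' hP α
      rwa [hrw] at this

section Flow

variable (A : Fin m → (Fin m → ℤ) → Matrix (Fin n) (Fin n) K)
variable (b : Fin m → (Fin m → ℤ) → (Fin n → K))

/-- The affine step map in direction `α`, as a permutation of base × state. -/
noncomputable def step (hA : ∀ α t, IsUnit (A α t)) (α : Fin m) :
    Equiv.Perm ((Fin m → ℤ) × (Fin n → K)) where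
  toFun p := (p.1 + Pi.single α 1, (A α p.1) *ᵥ p.2 + b α p.1)
  invFun p := (p.1 - Pi.single α 1,
    (A α (p.1 - Pi.single α 1))⁻¹ *ᵥ (p.2 - b α (p.1 - Pi.single α 1)))
  left_inv := by
    rintro ⟨t, x⟩
    have h1 : t + Pi.single α 1 - Pi.single α 1 = t := by abel
    simp only [h1]
    refine Prod.ext rfl ?_
    simp only [add_sub_cancel_right]
    rw [Matrix.mulVec_mulVec,
      Matrix.nonsing_inv_mul _ ((Matrix.isUnit_iff_isUnit_det _).mp (hA α t)),
      Matrix.one_mulVec]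
  right_inv := by
    rintro ⟨t, x⟩
    have h1 : t - Pi.single α 1 + Pi.single α 1 = t := by abel
    refine Prod.ext h1 ?_
    simp only
    rw [Matrix.mulVec_mulVec,
      Matrix.mul_nonsing_inv _ ((Matrix.isUnit_iff_isUnit_det _).mp (hA α _)),
      Matrix.one_mulVec, sub_add_cancel]

lemma step_apply (hA : ∀ α t, IsUnit (A α t)) (α : Fin m)
    (p : (Fin m → ℤ) × (Fin n → K)) :
    step A b hA α p = (p.1 + Pi.single α 1, (A α p.1) *ᵥ p.2 + b α p.1) := rfl

lemma step_comm (hA : ∀ α t, IsUnit (A α t))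
    (hcompat : ∀ (t : Fin m → ℤ) (α β : Fin m),
      A α (t + Pi.single β 1) * A β t = A β (t + Pi.single α 1) * A α t ∧
      (A α (t + Pi.single β 1)) *ᵥ (b β t) + b α (t + Pi.single β 1)
        = (A β (t + Pi.single α 1)) *ᵥ (b α t) + b β (t + Pi.single α 1))
    (α β : Fin m) : Commute (step A b hA α) (step A b hA β) := by
  apply Equiv.ext
  rintro ⟨t, x⟩
  have h1 := (hcompat t α β).1
  have h2 := (hcompat t α β).2
  simp only [Equiv.Perm.mul_apply, step_apply]
  refine Prod.ext (add_right_comm t _ _) ?_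
  simp only
  rw [Matrix.mulVec_add, Matrix.mulVec_add, Matrix.mulVec_mulVec, Matrix.mulVec_mulVec,
    h1, add_assoc, add_assoc, h2]

/-- The `ℤ^m`-flow generated by the commuting steps. -/
noncomputable def flowZ (hA : ∀ α t, IsUnit (A α t))
    (hcompat : ∀ (t : Fin m → ℤ) (α β : Fin m),
      A α (t + Pi.single β 1) * A β t = A β (t + Pi.single α 1) * A α t ∧
      (A α (t + Pi.single β 1)) *ᵥ (b β t) + b α (t + Pi.single β 1)
        = (A β (t + Pi.single α 1)) *ᵥ (b α t) + b β (t + Pi.single α 1))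
    (k : Fin m → ℤ) : Equiv.Perm ((Fin m → ℤ) × (Fin n → K)) :=
  MonoidHom.noncommPiCoprod (fun α => zpowersHom _ (step A b hA α))
    (fun α β _ x y =>
      ((step_comm A b hA hcompat α β).zpow_zpow x.toAdd y.toAdd))
    (fun α => Multiplicative.ofAdd (k α))

variable (hA : ∀ α t, IsUnit (A α t))
variable (hcompat : ∀ (t : Fin m → ℤ) (α β : Fin m),
      A α (t + Pi.single β 1) * A β t = A β (t + Pi.single α 1) * A α t ∧
      (A α (t + Pi.single β 1)) *ᵥ (b β t) + b α (t + Pi.single β 1)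
        = (A β (t + Pi.single α 1)) *ᵥ (b α t) + b β (t + Pi.single α 1))

lemma flowZ_add (k l : Fin m → ℤ) :
    flowZ A b hA hcompat (k + l) = flowZ A b hA hcompat k * flowZ A b hA hcompat l := by
  unfold flowZ
  rw [← _root_.map_mul]
  rfl

lemma flowZ_zero : flowZ A b hA hcompat 0 = 1 := by
  unfold flowZ
  rw [show (fun α => Multiplicative.ofAdd ((0 : Fin m → ℤ) α)) = 1 from rfl, _root_.map_one]

lemma flowZ_single (α : Fin m) :
    flowZ A b hA hcompat (Pi.single α 1) = step A b hA α := by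
  unfold flowZ
  have h : (fun β => Multiplicative.ofAdd ((Pi.single α 1 : Fin m → ℤ) β))
      = Pi.mulSingle α (Multiplicative.ofAdd (1 : ℤ)) := by
    funext β
    by_cases hb : β = α
    · subst hb; simp
    · rw [Pi.single_eq_of_ne hb, Pi.mulSingle_eq_of_ne hb]
      rfl
  rw [h]
  refine (MonoidHom.noncommPiCoprod_mulSingle ..).trans ?_
  simp [zpowersHom_apply]

lemma flowZ_fst : ∀ k : Fin m → ℤ, ∀ p, (flowZ A b hA hcompat k p).1 = p.1 + k := by
  let S : AddSubgroup (Fin m → ℤ) :=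
    { carrier := {k | ∀ p, (flowZ A b hA hcompat k p).1 = p.1 + k}
      add_mem' := by
        intro a c ha hc
        have ha' : ∀ p, (flowZ A b hA hcompat a p).1 = p.1 + a := ha
        have hc' : ∀ p, (flowZ A b hA hcompat c p).1 = p.1 + c := hc
        intro p
        rw [add_comm a c, flowZ_add, Equiv.Perm.mul_apply, hc', ha']
        abel
      zero_mem' := by
        intro p
        rw [flowZ_zero]
        simp
      neg_mem' := by
        intro a ha
        have ha' : ∀ p, (flowZ A b hA hcompat a p).1 = p.1 + a := ha
        intro p
        have h1 : flowZ A b hA hcompat a (flowZ A b hA hcompat (-a) p) = p := by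
          rw [← Equiv.Perm.mul_apply, ← flowZ_add, add_neg_cancel, flowZ_zero,
            Equiv.Perm.one_apply]
        have h2 := ha' (flowZ A b hA hcompat (-a) p)
        rw [h1] at h2
        rw [h2]
        abel }
  have hsingle : ∀ α : Fin m, Pi.single α (1 : ℤ) ∈ S := by
    intro α p
    rw [flowZ_single]
    rfl
  intro k
  have hk : k ∈ S := by
    have hrep : k = ∑ α : Fin m, (k α) • (Pi.single α (1 : ℤ) : Fin m → ℤ) := by
      have h1 : ∀ α : Fin m, (k α) • (Pi.single α (1 : ℤ) : Fin m → ℤ) = Pi.single α (k α) := by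
        intro α
        rw [← Pi.single_smul]
        simp
      simp_rw [h1]
      rw [Finset.univ_sum_single]
    rw [hrep]
    exact AddSubgroup.sum_mem S fun α _ => AddSubgroup.zsmul_mem S (hsingle α) _
  exact hk

include hA hcompat in
lemma exists_global (t₀ : Fin m → ℤ) (x₀ : Fin n → K) :
    ∃ x : (Fin m → ℤ) → (Fin n → K), x t₀ = x₀ ∧
      ∀ (t : Fin m → ℤ) (α : Fin m),
        x (t + Pi.single α 1) = (A α t) *ᵥ (x t) + b α t := by
  refine ⟨fun t => (flowZ A b hA hcompat (t - t₀) (t₀, x₀)).2, ?_, ?_⟩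
  · simp only [sub_self, flowZ_zero, Equiv.Perm.one_apply]
  · intro t α
    have h1 : t + Pi.single α 1 - t₀ = Pi.single α 1 + (t - t₀) := by abel
    have hq : (flowZ A b hA hcompat (t - t₀) (t₀, x₀)).1 = t := by
      rw [flowZ_fst]; abel
    simp only [h1, flowZ_add, flowZ_single, Equiv.Perm.mul_apply]
    rw [step_apply]
    simp only [hq]

end Flow

section Unique

variable {A : Fin m → (Fin m → ℤ) → Matrix (Fin n) (Fin n) K}
variable {b : Fin m → (Fin m → ℤ) → (Fin n → K)}
variable {t₁ : Fin m → ℤ} {x y : (Fin m → ℤ) → (Fin n → K)}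

lemma agree_forward
    (hx : ∀ t : Fin m → ℤ, t₁ ≤ t → ∀ α : Fin m,
      x (t + Pi.single α 1) = (A α t) *ᵥ (x t) + b α t)
    (hy : ∀ t : Fin m → ℤ, t₁ ≤ t → ∀ α : Fin m,
      y (t + Pi.single α 1) = (A α t) *ᵥ (y t) + b α t)
    (s : Fin m → ℤ) (hs : t₁ ≤ s) (h : y s = x s) :
    ∀ k : Fin m → ℤ, 0 ≤ k → y (s + k) = x (s + k) := by
  refine nonneg_induction (by simpa using h) ?_
  intro k hk ih α
  have hsk : t₁ ≤ s + k := le_trans hs (le_add_of_nonneg_right hk)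
  rw [← add_assoc, hx _ hsk, hy _ hsk, ih]

lemma agree_backward (hA : ∀ α t, IsUnit (A α t))
    (hx : ∀ t : Fin m → ℤ, t₁ ≤ t → ∀ α : Fin m,
      x (t + Pi.single α 1) = (A α t) *ᵥ (x t) + b α t)
    (hy : ∀ t : Fin m → ℤ, t₁ ≤ t → ∀ α : Fin m,
      y (t + Pi.single α 1) = (A α t) *ᵥ (y t) + b α t) :
    ∀ k : Fin m → ℤ, 0 ≤ k → ∀ s : Fin m → ℤ, t₁ ≤ s →
      y (s + k) = x (s + k) → y s = x s := by
  refine nonneg_induction (fun s _ h => by simpa using h) ?_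
  intro k hk ih α s hs h
  apply ih s hs
  have hsk : t₁ ≤ s + k := le_trans hs (le_add_of_nonneg_right hk)
  rw [← add_assoc, hx _ hsk α, hy _ hsk α] at h
  have h2 := add_right_cancel h
  exact (Matrix.mulVec_injective_iff_isUnit.mpr (hA α (s + k))) h2

lemma cone_unique (hA : ∀ α t, IsUnit (A α t)) {t₀ : Fin m → ℤ}
    (hx : ∀ t : Fin m → ℤ, t₁ ≤ t → ∀ α : Fin m,
      x (t + Pi.single α 1) = (A α t) *ᵥ (x t) + b α t)
    (hy : ∀ t : Fin m → ℤ, t₁ ≤ t → ∀ α : Fin m,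
      y (t + Pi.single α 1) = (A α t) *ᵥ (y t) + b α t)
    (ht₀ : t₁ ≤ t₀) (hval : y t₀ = x t₀) :
    ∀ t : Fin m → ℤ, t₁ ≤ t → y t = x t := by
  intro t ht
  have e1 : t₀ + (t ⊔ t₀ - t₀) = t ⊔ t₀ := by abel
  have e2 : t + (t ⊔ t₀ - t) = t ⊔ t₀ := by abel
  have h1 : y (t ⊔ t₀) = x (t ⊔ t₀) := by
    have := agree_forward hx hy t₀ ht₀ hval (t ⊔ t₀ - t₀) (by simp)
    rwa [e1] at this
  exact agree_backward hA hx hy (t ⊔ t₀ - t) (by simp) t ht (by rwa [e2])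

end Unique

end LMRAux

/-- Theorem 6 of the paper.
For the linear recurrence `x (t + 1_α) = A α t *ᵥ x t + b α t` on `ℤ^m`, the
following are equivalent:
(i) every matrix `A α t` is invertible and the two compatibility relations hold;
(ii) for every `(t₀, x₀)` and every `α₀` there exists at least one solution on
`{t : t₀ - 1_{α₀} ≤ t}` with `x t₀ = x₀`;
(iii) for every `(t₀, x₀)` and every `α₀` such a solution exists and is unique;
(iv) for all `t₁ ≤ t₀` and every `x₀` there is a unique solution on
`{t : t₁ ≤ t}` with `x t₀ = x₀`;
(v) for every `(t₀, x₀)` there is a unique solution on all of `ℤ^m` with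
`x t₀ = x₀`. -/
theorem linear_multitime_recurrence_tfae
    {m n : ℕ} (hm : 1 ≤ m) (hn : 1 ≤ n) {K : Type*} [Field K]
    (A : Fin m → (Fin m → ℤ) → Matrix (Fin n) (Fin n) K)
    (b : Fin m → (Fin m → ℤ) → (Fin n → K)) :
    List.TFAE [
      -- (i)
      (∀ (α : Fin m) (t : Fin m → ℤ), IsUnit (A α t)) ∧
        (∀ (t : Fin m → ℤ) (α β : Fin m),
          A α (t + Pi.single β 1) * A β t = A β (t + Pi.single α 1) * A α t ∧
          (A α (t + Pi.single β 1)).mulVec (b β t) + b α (t + Pi.single β 1)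
            = (A β (t + Pi.single α 1)).mulVec (b α t) + b β (t + Pi.single α 1)),
      -- (ii)
      ∀ (t₀ : Fin m → ℤ) (x₀ : Fin n → K) (α₀ : Fin m),
        ∃ x : (Fin m → ℤ) → (Fin n → K), x t₀ = x₀ ∧
          ∀ t : Fin m → ℤ, t₀ - Pi.single α₀ 1 ≤ t → ∀ α : Fin m,
            x (t + Pi.single α 1) = (A α t).mulVec (x t) + b α t,
      -- (iii)
      ∀ (t₀ : Fin m → ℤ) (x₀ : Fin n → K) (α₀ : Fin m),
        ∃ x : (Fin m → ℤ) → (Fin n → K),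
          (x t₀ = x₀ ∧
            ∀ t : Fin m → ℤ, t₀ - Pi.single α₀ 1 ≤ t → ∀ α : Fin m,
              x (t + Pi.single α 1) = (A α t).mulVec (x t) + b α t) ∧
          ∀ y : (Fin m → ℤ) → (Fin n → K),
            (y t₀ = x₀ ∧
              ∀ t : Fin m → ℤ, t₀ - Pi.single α₀ 1 ≤ t → ∀ α : Fin m,
                y (t + Pi.single α 1) = (A α t).mulVec (y t) + b α t) →
            ∀ t : Fin m → ℤ, t₀ - Pi.single α₀ 1 ≤ t → y t = x t,
      -- (iv)
      ∀ (t₀ t₁ : Fin m → ℤ), t₁ ≤ t₀ → ∀ x₀ : Fin n → K,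
        ∃ x : (Fin m → ℤ) → (Fin n → K),
          (x t₀ = x₀ ∧
            ∀ t : Fin m → ℤ, t₁ ≤ t → ∀ α : Fin m,
              x (t + Pi.single α 1) = (A α t).mulVec (x t) + b α t) ∧
          ∀ y : (Fin m → ℤ) → (Fin n → K),
            (y t₀ = x₀ ∧
              ∀ t : Fin m → ℤ, t₁ ≤ t → ∀ α : Fin m,
                y (t + Pi.single α 1) = (A α t).mulVec (y t) + b α t) →
            ∀ t : Fin m → ℤ, t₁ ≤ t → y t = x t,
      -- (v)
      ∀ (t₀ : Fin m → ℤ) (x₀ : Fin n → K),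
        ∃! x : (Fin m → ℤ) → (Fin n → K), x t₀ = x₀ ∧
          ∀ (t : Fin m → ℤ) (α : Fin m),
            x (t + Pi.single α 1) = (A α t).mulVec (x t) + b α t
    ] := by
  tfae_have 1 → 3 := by
    rintro ⟨hA, hcompat⟩ t₀ x₀ α₀
    obtain ⟨x, hx0, hxrec⟩ := LMRAux.exists_global A b hA hcompat t₀ x₀
    refine ⟨x, ⟨hx0, fun t _ α => hxrec t α⟩, ?_⟩
    rintro y ⟨hy0, hyrec⟩ t ht
    exact LMRAux.cone_unique hA (fun t _ α => hxrec t α) hyrec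
      (sub_le_self _ (LMRAux.single_nonneg' α₀)) (hy0.trans hx0.symm) t ht
  tfae_have 3 → 2 := by
    intro h t₀ x₀ α₀
    obtain ⟨x, ⟨h1, h2⟩, -⟩ := h t₀ x₀ α₀
    exact ⟨x, h1, h2⟩
  tfae_have 1 → 4 := by
    rintro ⟨hA, hcompat⟩ t₀ t₁ ht x₀
    obtain ⟨x, hx0, hxrec⟩ := LMRAux.exists_global A b hA hcompat t₀ x₀
    refine ⟨x, ⟨hx0, fun t _ α => hxrec t α⟩, ?_⟩
    rintro y ⟨hy0, hyrec⟩ t htt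
    exact LMRAux.cone_unique hA (fun t _ α => hxrec t α) hyrec ht
      (hy0.trans hx0.symm) t htt
  tfae_have 4 → 2 := by
    intro h t₀ x₀ α₀
    obtain ⟨x, ⟨h1, h2⟩, -⟩ :=
      h t₀ (t₀ - Pi.single α₀ 1) (sub_le_self _ (LMRAux.single_nonneg' α₀)) x₀
    exact ⟨x, h1, h2⟩
  tfae_have 1 → 5 := by
    rintro ⟨hA, hcompat⟩ t₀ x₀
    obtain ⟨x, hx0, hxrec⟩ := LMRAux.exists_global A b hA hcompat t₀ x₀
    refine ⟨x, ⟨hx0, hxrec⟩, ?_⟩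
    rintro y ⟨hy0, hyrec⟩
    funext t
    exact LMRAux.cone_unique (t₁ := t ⊓ t₀) hA (fun s _ α => hxrec s α)
      (fun s _ α => hyrec s α) inf_le_right (hy0.trans hx0.symm) t inf_le_left
  tfae_have 5 → 2 := by
    intro h t₀ x₀ α₀
    obtain ⟨x, ⟨h1, h2⟩, -⟩ := h t₀ x₀
    exact ⟨x, h1, fun t _ α => h2 t α⟩
  tfae_have 2 → 1 := by
    intro h
    constructor
    · intro α s
      rw [← Matrix.mulVec_surjective_iff_isUnit]
      intro v
      obtain ⟨x, hx0, hrec⟩ := h (s + Pi.single α 1) (v + b α s) α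
      have hcone : s + Pi.single α 1 - Pi.single α 1 ≤ s := le_of_eq (add_sub_cancel_right s _)
      have hstep := hrec s hcone α
      rw [hx0] at hstep
      refine ⟨x s, ?_⟩
      have h2 := congrArg (fun w => w - b α s) hstep
      simpa using h2.symm
    · intro t α β
      have key : ∀ w : Fin n → K,
          (A α (t + Pi.single β 1)) *ᵥ ((A β t) *ᵥ w + b β t) + b α (t + Pi.single β 1)
            = (A β (t + Pi.single α 1)) *ᵥ ((A α t) *ᵥ w + b α t)
              + b β (t + Pi.single α 1) := by
        intro w
        obtain ⟨x, hx0, hrec⟩ := h t w α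
        have hc0 : t - Pi.single α 1 ≤ t := sub_le_self _ (LMRAux.single_nonneg' α)
        have hcβ : t - Pi.single α 1 ≤ t + Pi.single β 1 :=
          hc0.trans (le_add_of_nonneg_right (LMRAux.single_nonneg' β))
        have hcα : t - Pi.single α 1 ≤ t + Pi.single α 1 :=
          hc0.trans (le_add_of_nonneg_right (LMRAux.single_nonneg' α))
        have e1 := hrec (t + Pi.single β 1) hcβ α
        have e2 := hrec t hc0 β
        have e3 := hrec (t + Pi.single α 1) hcα β
        have e4 := hrec t hc0 α
        rw [e2, hx0] at e1
        rw [e4, hx0] at e3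
        rw [add_right_comm] at e1
        exact e1.symm.trans e3
      have hvec : (A α (t + Pi.single β 1)).mulVec (b β t) + b α (t + Pi.single β 1)
          = (A β (t + Pi.single α 1)).mulVec (b α t) + b β (t + Pi.single α 1) := by
        have hk0 := key 0
        simpa [Matrix.mulVec_zero] using hk0
      refine ⟨?_, hvec⟩
      ext i j
      have hk := key (Pi.single j 1)
      rw [Matrix.mulVec_add, Matrix.mulVec_add, Matrix.mulVec_mulVec, Matrix.mulVec_mulVec,
        add_assoc, add_assoc, hvec] at hk
      have hk2 := add_right_cancel hk
      have hk3 := congrFun hk2 i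
      simpa [Matrix.mulVec_single] using hk3
  tfae_finish
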